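/- Let k ≥ 3 and 2k-1 ≤ n ≤ 3k-3. Then the word P_n^(k) = W_{n-2k+1}^(k) W_{n-2k+1}^(k) V_n^(k) equals the fractional power (W_{n-2k+1}^(k))^r with exponent r = 3 - 1/2^{n-2k+1}; in particular, P_n^(k) is the prefix of length r·|W_{n-2k+1}^(k)| of the infinite periodic word (W_{n-2k+1}^(k))^ω. -/

import Mathlib

def kbon (k : ℕ) (n : ℕ) : ℕ :=
  if _h1 : n < k - 1 then 0
  else if _h2 : n = k - 1 then 1
  else ∑ i ∈ Finset.range k, kbon k (n - i - 1)
termination_by n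
decreasing_by omega

/-- The k-bonacci morphism on words over ℕ. -/
def phiW (k : ℕ) (w : List ℕ) : List ℕ :=
  w.flatMap (fun a => if a % k = k - 1 then [a + 1] else [k * (a / k), a + 1])

/-- The finite k-bonacci word over the infinite alphabet ℕ. -/
def W (k n : ℕ) : List ℕ := (phiW k)^[n] [0]

def fk (w : List ℕ) : List ℕ := w.flatMap (fun a => [0, a + 1])

def V (k m : ℕ) : List ℕ := (((List.range m).reverse).map (W k)).flatten

lemma W_succ (k m : ℕ) : W k (m + 1) = phiW k (W k m) := by
  rw [W, Function.iterate_succ_apply', ← W]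

lemma mem_W_le (k : ℕ) : ∀ m, ∀ a ∈ W k m, a ≤ m := by
  intro m
  induction m with
  | zero => simp [W]
  | succ m ih =>
    intro a ha
    rw [W_succ] at ha
    simp only [phiW, List.mem_flatMap] at ha
    obtain ⟨b, hb, hab⟩ := ha
    have hbm := ih b hb
    have hdiv : k * (b / k) ≤ b := by
      rw [Nat.mul_comm]; exact Nat.div_mul_le_self b k
    split at hab <;> simp at hab <;> omega

lemma phiW_eq_fk (k : ℕ) (w : List ℕ) (h : ∀ a ∈ w, a + 2 ≤ k) :
    phiW k w = fk w := by
  induction w with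
  | nil => rfl
  | cons a t ih =>
    have ha := h a List.mem_cons_self
    have h1 : ¬ (a % k = k - 1) := by
      rw [Nat.mod_eq_of_lt (by omega)]; omega
    have h2 : k * (a / k) = 0 := by
      rw [Nat.div_eq_of_lt (by omega), Nat.mul_zero]
    have ih' := ih (fun b hb => h b (List.mem_cons_of_mem a hb))
    simp only [phiW, fk, List.flatMap_cons] at ih' ⊢
    rw [ih', if_neg h1, h2]

lemma fk_append (u v : List ℕ) : fk (u ++ v) = fk u ++ fk v := by
  simp [fk]

lemma V_succ (k m : ℕ) : V k (m + 1) = W k m ++ V k m := by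
  simp [V, List.range_succ]

lemma W_eq_V (k : ℕ) : ∀ m, m + 1 ≤ k →
    W k m = V k m ++ [m] ∧ fk (V k m) ++ [0] = W k m ++ V k m := by
  intro m
  induction m with
  | zero =>
    intro _
    constructor
    · rfl
    · rfl
  | succ m ih =>
    intro hm
    obtain ⟨h1, h2⟩ := ih (by omega)
    have hfW : fk (W k m) = W k m ++ V k m ++ [m + 1] := by
      conv_lhs => rw [h1]
      rw [fk_append, show fk [m] = [0] ++ [m+1] from rfl, ← List.append_assoc, h2,
        List.append_assoc]
    have hstep : W k (m + 1) = fk (W k m) := by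
      rw [W_succ]
      exact phiW_eq_fk k _ (fun a ha => by have := mem_W_le k m a ha; omega)
    constructor
    · rw [hstep, hfW, V_succ]
    · rw [V_succ, fk_append, List.append_assoc, h2, hstep, hfW]

lemma fk_length (w : List ℕ) : (fk w).length = 2 * w.length := by
  induction w with
  | nil => rfl
  | cons a t ih => simp [fk, List.flatMap_cons] at ih ⊢; omega

lemma W_length (k : ℕ) : ∀ m, m + 1 ≤ k → (W k m).length = 2 ^ m := by
  intro m
  induction m with
  | zero => intro _; rfl
  | succ m ih =>
    intro hm
    have hstep : W k (m + 1) = fk (W k m) := by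
      rw [W_succ]
      exact phiW_eq_fk k _ (fun a ha => by have := mem_W_le k m a ha; omega)
    rw [hstep, fk_length, ih (by omega)]
    ring

theorem P_is_fractional_power (k n : ℕ) (hk : 3 ≤ k) (h1 : 2 * k - 1 ≤ n) (h2 : n ≤ 3 * k - 3) :
    (W k (n + 1 - 2 * k) ++ W k (n + 1 - 2 * k) ++
        (((List.range (n + 1 - 2 * k)).reverse).map (W k)).flatten) <+:
      (W k (n + 1 - 2 * k) ++ W k (n + 1 - 2 * k) ++ W k (n + 1 - 2 * k)) ∧
    ((W k (n + 1 - 2 * k) ++ W k (n + 1 - 2 * k) ++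
        (((List.range (n + 1 - 2 * k)).reverse).map (W k)).flatten).length : ℚ) =
      (3 - 1 / 2 ^ (n + 1 - 2 * k)) * (W k (n + 1 - 2 * k)).length := by
  set m := n + 1 - 2 * k with hmdef
  have hmk : m + 1 ≤ k := by omega
  obtain ⟨hWV, _⟩ := W_eq_V k m hmk
  have hVdef : (((List.range m).reverse).map (W k)).flatten = V k m := rfl
  have hWlen : (W k m).length = 2 ^ m := W_length k m hmk
  have hVlen : (V k m).length = 2 ^ m - 1 := by
    have := congrArg List.length hWV
    simp at this
    omega
  constructor
  · refine ⟨[m], ?_⟩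
    rw [hVdef, List.append_assoc, List.append_assoc, List.append_assoc, ← hWV]
  · rw [hVdef]
    simp only [List.length_append, hWlen, hVlen]
    have h2m : (1:ℕ) ≤ 2 ^ m := Nat.one_le_two_pow
    have : ((2 ^ m + 2 ^ m + (2 ^ m - 1) : ℕ) : ℚ) = 3 * 2 ^ m - 1 := by
      push_cast [h2m]
      ring
    rw [this]
    have hpos : (2:ℚ) ^ m ≠ 0 := by positivity
    field_simp
    push_cast
    ring
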